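/- For v : [0,∞) × S^1 → R^{2n} = C^n of class H^1 vanishing for s large, the identity ||∇v||^2_{L^2} = ||∂̄_{J_0} v||^2_{L^2} + ||P^- v(0,·)||^2_{H^{1/2}(S^1)} − ||P^+ v(0,·)||^2_{H^{1/2}(S^1)} holds, where ∂̄_{J_0} = ∂_s + i∂_t, and P^± are the projections of a loop onto its positive/negative Fourier modes. -/

import Mathlib

open Real MeasureTheory Complex intervalIntegral AddCircle Set
noncomputable section
namespace Stmt19


def eC (k : ℤ) (t : ℝ) : ℂ := Complex.exp (-2 * (π : ℂ) * Complex.I * (k : ℂ) * (t : ℂ))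

lemma eC_cont (k : ℤ) : Continuous (eC k) := by
  unfold eC; fun_prop

lemma eC_norm (k : ℤ) (t : ℝ) : ‖eC k t‖ = 1 := by
  have : eC k t = Complex.exp (((-2 * π * k * t : ℝ) : ℂ) * Complex.I) := by
    unfold eC; congr 1; push_cast; ring
  rw [this]
  simpa using Complex.norm_exp_ofReal_mul_I (-2 * π * k * t)

lemma eC_deriv (k : ℤ) (t : ℝ) :
    HasDerivAt (eC k) ((-2 * (π : ℂ) * Complex.I * (k : ℂ)) * eC k t) t := by
  have h1 : HasDerivAt (fun t : ℝ => (t : ℂ)) 1 t := by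
    simpa using (hasDerivAt_id t).ofReal_comp
  have h2 : HasDerivAt (fun t : ℝ => (-2 * (π : ℂ) * Complex.I * (k : ℂ)) * (t : ℂ))
      (-2 * (π : ℂ) * Complex.I * (k : ℂ)) t := by
    simpa using h1.const_mul (-2 * (π : ℂ) * Complex.I * (k : ℂ))
  have hfun : eC k = fun t : ℝ => Complex.exp ((-2 * (π : ℂ) * Complex.I * (k : ℂ)) * (t : ℂ)) :=
    rfl
  rw [hfun]
  simpa [mul_comm] using h2.cexp

lemma eC_zero (k : ℤ) : eC k 0 = 1 := by simp [eC]

lemma eC_one (k : ℤ) : eC k 1 = 1 := by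
  have : eC k 1 = Complex.exp ((-k : ℤ) * (2 * π * Complex.I)) := by
    unfold eC; congr 1; push_cast; ring
  rw [this, Complex.exp_int_mul_two_pi_mul_I]

def Fc (f : ℝ → ℂ) (k : ℤ) : ℂ := ∫ t in (0:ℝ)..1, eC k t * f t

theorem Fc_eq (f : ℝ → ℂ) (k : ℤ) :
    haveI : Fact ((0:ℝ) < 1) := ⟨one_pos⟩
    Fc f k = fourierCoeffOn (zero_lt_one) f k := by
  haveI : Fact ((0:ℝ) < 1) := ⟨one_pos⟩
  rw [fourierCoeffOn_eq_integral]
  simp [Fc, fourier_coe_apply, eC]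
  congr 1
  ext t
  congr 1
  rw [← Complex.exp_conj]
  congr 1
  simp [map_mul, Complex.conj_I]
  exact Or.inl (Or.inl ((map_ofNat (starRingEnd ℂ) 2).symm))

theorem scalar_parseval (f g : ℝ → ℂ) (hf : Continuous f) (hg : Continuous g) :
    HasSum (fun k : ℤ => (starRingEnd ℂ) (Fc f k) * Fc g k)
      (∫ t in (0:ℝ)..1, (starRingEnd ℂ) (f t) * g t) := by
  haveI : Fact ((0:ℝ) < 1) := ⟨one_pos⟩
  set F : AddCircle (1:ℝ) → ℂ := AddCircle.liftIoc 1 0 f with hF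
  set G : AddCircle (1:ℝ) → ℂ := AddCircle.liftIoc 1 0 g with hG
  have measF : ∀ (h : ℝ → ℂ), Continuous h → Measurable (AddCircle.liftIoc 1 0 h) := by
    intro h hh
    exact (hh.comp continuous_subtype_val).measurable.comp
      (AddCircle.measurableEquivIoc 1 0).measurable
  have bddF : ∀ (h : ℝ → ℂ), Continuous h → ∃ C, ∀ x, ‖AddCircle.liftIoc 1 0 h x‖ ≤ C := by
    intro h hh
    obtain ⟨C, hC⟩ := (isCompact_Icc (a := (0:ℝ)) (b := 1)).exists_bound_of_continuousOn
      hh.continuousOn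
    refine ⟨C, fun x => ?_⟩
    rw [AddCircle.liftIoc]
    exact hC _ (Ioc_subset_Icc_self (by simpa using ((AddCircle.equivIoc 1 0) x).2))
  have memF : ∀ (h : ℝ → ℂ), Continuous h → MemLp (AddCircle.liftIoc 1 0 h) 2 haarAddCircle := by
    intro h hh
    obtain ⟨C, hC⟩ := bddF h hh
    exact MemLp.of_bound (measF h hh).aestronglyMeasurable C (ae_of_all _ hC)
  set fL := (memF f hf).toLp F
  set gL := (memF g hg).toLp G
  have hcoeff : ∀ (h : ℝ → ℂ) (hh : Continuous h) (k : ℤ),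
      fourierBasis.repr ((memF h hh).toLp _) k = Fc h k := by
    intro h hh k
    rw [fourierBasis_repr]
    have : fourierCoeff (((memF h hh).toLp _ : Lp ℂ 2 haarAddCircle) : AddCircle (1:ℝ) → ℂ) k
        = fourierCoeff (AddCircle.liftIoc 1 0 h) k := by
      unfold fourierCoeff
      exact integral_congr_ae (((memF h hh).coeFn_toLp).mono (fun x hx => by simp only [hx]))
    rw [this, fourierCoeff_liftIoc_eq]
    rw [show Fc h k = fourierCoeffOn (zero_lt_one) h k from Fc_eq h k]
    norm_num
  have key := fourierBasis.hasSum_inner_mul_inner fL gL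
  have h1 : ∀ k : ℤ, (inner ℂ fL (fourierBasis k) : ℂ) * inner ℂ (fourierBasis k) gL
      = (starRingEnd ℂ) (Fc f k) * Fc g k := by
    intro k
    rw [← fourierBasis.repr_apply_apply, ← inner_conj_symm, ← fourierBasis.repr_apply_apply,
      hcoeff f hf, hcoeff g hg]
  have h2 : (inner ℂ fL gL : ℂ) = ∫ t in (0:ℝ)..1, (starRingEnd ℂ) (f t) * g t := by
    rw [MeasureTheory.L2.inner_def]
    have : ∫ x, (inner ℂ (fL x) (gL x) : ℂ) ∂haarAddCircle
        = ∫ x, (starRingEnd ℂ) (F x) * G x ∂haarAddCircle := by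
      refine integral_congr_ae ?_
      filter_upwards [(memF f hf).coeFn_toLp, (memF g hg).coeFn_toLp] with x hx hy
      rw [RCLike.inner_apply', hx, hy]
    rw [this]
    have hmeas : (volume : Measure (AddCircle (1:ℝ))) = haarAddCircle := by
      rw [volume_eq_smul_haarAddCircle]; simp
    rw [← hmeas, ← AddCircle.intervalIntegral_preimage (1:ℝ) 0]
    rw [zero_add]
    refine intervalIntegral.integral_congr_ae ?_
    filter_upwards [] with t
    intro ht
    rw [Set.uIoc_of_le (by norm_num : (0:ℝ) ≤ 1)] at ht
    rw [hF, hG, AddCircle.liftIoc_coe_apply (by simpa using ht),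
      AddCircle.liftIoc_coe_apply (by simpa using ht)]
  have heq : (fun k : ℤ => (starRingEnd ℂ) (Fc f k) * Fc g k)
      = fun k => (inner ℂ fL (fourierBasis k) : ℂ) * inner ℂ (fourierBasis k) gL :=
    funext fun k => (h1 k).symm
  rw [heq, ← h2]
  exact key

variable {n : ℕ}

def Fcv (f : ℝ → EuclideanSpace ℂ (Fin n)) (k : ℤ) : EuclideanSpace ℂ (Fin n) :=
  ∫ t in (0:ℝ)..1, eC k t • f t

lemma Fcv_apply (f : ℝ → EuclideanSpace ℂ (Fin n)) (hf : Continuous f) (k : ℤ) (j : Fin n) :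
    Fcv f k j = Fc (fun t => f t j) k := by
  have hint : IntervalIntegrable (fun t => eC k t • f t) volume 0 1 :=
    ((eC_cont k).smul hf).intervalIntegrable _ _
  have h := (EuclideanSpace.proj (𝕜 := ℂ) j).intervalIntegral_comp_comm hint
  unfold Fcv Fc
  calc (∫ t in (0:ℝ)..1, eC k t • f t) j
      = EuclideanSpace.proj (𝕜 := ℂ) j (∫ t in (0:ℝ)..1, eC k t • f t) := rfl
    _ = ∫ t in (0:ℝ)..1, EuclideanSpace.proj (𝕜 := ℂ) j (eC k t • f t) := h.symm
    _ = ∫ t in (0:ℝ)..1, eC k t * (fun t => f t j) t := rfl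

lemma continuous_comp_proj (f : ℝ → EuclideanSpace ℂ (Fin n)) (hf : Continuous f) (j : Fin n) :
    Continuous (fun t => f t j) :=
  (EuclideanSpace.proj (𝕜 := ℂ) j).continuous.comp hf

theorem vec_parseval (f g : ℝ → EuclideanSpace ℂ (Fin n))
    (hf : Continuous f) (hg : Continuous g) :
    HasSum (fun k : ℤ => (inner ℂ (Fcv f k) (Fcv g k) : ℂ))
      (∫ t in (0:ℝ)..1, (inner ℂ (f t) (g t) : ℂ)) := by
  have hs : ∀ j : Fin n, HasSum
      (fun k : ℤ => (starRingEnd ℂ) (Fc (fun t => f t j) k) * Fc (fun t => g t j) k)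
      (∫ t in (0:ℝ)..1, (starRingEnd ℂ) (f t j) * g t j) :=
    fun j => scalar_parseval _ _ (continuous_comp_proj f hf j) (continuous_comp_proj g hg j)
  have H := hasSum_sum (s := Finset.univ) (fun j _ => hs j)
  have e1 : (fun k : ℤ => ∑ j : Fin n,
      (starRingEnd ℂ) (Fc (fun t => f t j) k) * Fc (fun t => g t j) k)
      = fun k : ℤ => (inner ℂ (Fcv f k) (Fcv g k) : ℂ) := by
    funext k
    rw [PiLp.inner_apply]
    refine (Finset.sum_congr rfl fun j _ => ?_).symm
    rw [Fcv_apply f hf, Fcv_apply g hg, RCLike.inner_apply']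
  have e2 : (∑ j : Fin n, ∫ t in (0:ℝ)..1, (starRingEnd ℂ) (f t j) * g t j)
      = ∫ t in (0:ℝ)..1, (inner ℂ (f t) (g t) : ℂ) := by
    rw [← intervalIntegral.integral_finset_sum]
    · simp only [PiLp.inner_apply, RCLike.inner_apply']
    · intro j _
      exact ((Complex.continuous_conj.comp (continuous_comp_proj f hf j)).mul
        (continuous_comp_proj g hg j)).intervalIntegrable _ _
  rw [e1, e2] at H
  exact H

lemma re_inner_eq (x y : EuclideanSpace ℂ (Fin n)) :
    (inner ℂ x y : ℂ).re = (inner ℝ x y : ℝ) := by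
  rw [PiLp.inner_apply, PiLp.inner_apply, Complex.re_sum]
  exact Finset.sum_congr rfl fun j _ => by rw [RCLike.inner_apply', Complex.inner, mul_comm]


lemma integrableOn_and_integral {S : ℝ} (hS : 0 ≤ S) {f : ℝ → ℝ} (hf : Continuous f)
    (hz : ∀ s, S < s → f s = 0) :
    IntegrableOn f (Ioi 0) volume ∧ (∫ s in Ioi 0, f s) = ∫ s in (0:ℝ)..S, f s := by
  have h1 : IntegrableOn f (Ioc 0 S) volume := hf.integrableOn_Ioc
  have heq : EqOn f (fun _ => (0:ℝ)) (Ioi S) := fun s hs => hz s hs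
  have h2 : IntegrableOn f (Ioi S) volume := by
    rw [integrableOn_congr_fun heq measurableSet_Ioi]
    exact integrableOn_zero
  have hu : Ioc 0 S ∪ Ioi S = Ioi 0 := Ioc_union_Ioi_eq_Ioi hS
  constructor
  · rw [← hu]; exact h1.union h2
  · rw [← hu, setIntegral_union (Ioc_disjoint_Ioi le_rfl) measurableSet_Ioi h1 h2]
    rw [setIntegral_congr_fun measurableSet_Ioi heq]
    simp [intervalIntegral.integral_of_le hS]

end Stmt19

open Stmt19

theorem stmt_19 (n : ℕ) (v : ℝ × ℝ → EuclideanSpace ℂ (Fin n))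
    (hv : ContDiff ℝ 1 v) (hper : ∀ s t : ℝ, v (s, t + 1) = v (s, t))
    (hsupp : ∃ S : ℝ, ∀ s t : ℝ, S ≤ s → v (s, t) = 0) :
    let D1 : (ℝ × ℝ) → EuclideanSpace ℂ (Fin n) := fun q => fderiv ℝ v q (1, 0)
    let D2 : (ℝ × ℝ) → EuclideanSpace ℂ (Fin n) := fun q => fderiv ℝ v q (0, 1)
    let coef : ℤ → EuclideanSpace ℂ (Fin n) := fun k =>
      ∫ t in (0:ℝ)..1, Complex.exp (-2 * (π : ℂ) * Complex.I * (k : ℂ) * (t : ℂ)) • v (0, t)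
    (∫ s in Set.Ioi (0:ℝ), ∫ t in (0:ℝ)..1, (‖D1 (s, t)‖ ^ 2 + ‖D2 (s, t)‖ ^ 2)) =
      (∫ s in Set.Ioi (0:ℝ), ∫ t in (0:ℝ)..1, ‖D1 (s, t) + Complex.I • D2 (s, t)‖ ^ 2) +
        2 * π * (∑' k : ℕ, ((k : ℝ) + 1) * ‖coef (-(k : ℤ) - 1)‖ ^ 2) -
        2 * π * (∑' k : ℕ, ((k : ℝ) + 1) * ‖coef ((k : ℤ) + 1)‖ ^ 2) := by
  intro D1 D2 coef
  obtain ⟨S₀, hS₀⟩ := hsupp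
  set S : ℝ := max S₀ 0 with hSdef
  have hS0 : (0:ℝ) ≤ S := le_max_right _ _
  have hvS : ∀ s t : ℝ, S ≤ s → v (s, t) = 0 := fun s t hs =>
    hS₀ s t (le_trans (le_max_left _ _) hs)
  have hvd : Differentiable ℝ v := hv.differentiable one_ne_zero
  have hcfd : Continuous (fderiv ℝ v) := hv.continuous_fderiv one_ne_zero
  have hcD1 : Continuous D1 :=
    (ContinuousLinearMap.apply ℝ (EuclideanSpace ℂ (Fin n)) ((1:ℝ), (0:ℝ))).continuous.comp hcfd
  have hcD2 : Continuous D2 :=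
    (ContinuousLinearMap.apply ℝ (EuclideanSpace ℂ (Fin n)) ((0:ℝ), (1:ℝ))).continuous.comp hcfd
  -- partial derivatives as 1D derivatives
  have hD1t : ∀ s t : ℝ, HasDerivAt (fun σ => v (σ, t)) (D1 (s, t)) s := by
    intro s t
    have h2 : HasDerivAt (fun σ : ℝ => (σ, t)) ((1:ℝ), (0:ℝ)) s :=
      (hasDerivAt_id s).prodMk (hasDerivAt_const s t)
    exact (hvd (s, t)).hasFDerivAt.comp_hasDerivAt s h2
  have hD2t : ∀ s t : ℝ, HasDerivAt (fun τ => v (s, τ)) (D2 (s, t)) t := by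
    intro s t
    have h2 : HasDerivAt (fun τ : ℝ => (s, τ)) ((0:ℝ), (1:ℝ)) t :=
      (hasDerivAt_const t s).prodMk (hasDerivAt_id t)
    exact (hvd (s, t)).hasFDerivAt.comp_hasDerivAt t h2
  -- vanishing of derivatives for s > S
  have hfz : ∀ s t : ℝ, S < s → fderiv ℝ v (s, t) = 0 := by
    intro s t hst
    have hopen : IsOpen {q : ℝ × ℝ | S < q.1} := isOpen_lt continuous_const continuous_fst
    have hev : v =ᶠ[nhds (s, t)] fun _ => 0 := by
      filter_upwards [hopen.mem_nhds (show S < (s, t).1 from hst)] with q hq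
      rw [← Prod.mk.eta (p := q)]
      exact hvS q.1 q.2 (le_of_lt hq)
    rw [hev.fderiv_eq]
    exact fderiv_const_apply 0
  have hD1z : ∀ s t : ℝ, S < s → D1 (s, t) = 0 := by
    intro s t h
    show fderiv ℝ v (s, t) (1, 0) = 0
    rw [hfz s t h]; rfl
  have hD2z : ∀ s t : ℝ, S < s → D2 (s, t) = 0 := by
    intro s t h
    show fderiv ℝ v (s, t) (0, 1) = 0
    rw [hfz s t h]; rfl
  -- Fourier coefficients
  set c : ℤ → ℝ → EuclideanSpace ℂ (Fin n) := fun k s => Fcv (fun t => v (s, t)) k with hcdef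
  set E1 : ℤ → ℝ → EuclideanSpace ℂ (Fin n) := fun k s => Fcv (fun t => D1 (s, t)) k with hE1def
  set E2 : ℤ → ℝ → EuclideanSpace ℂ (Fin n) := fun k s => Fcv (fun t => D2 (s, t)) k with hE2def
  have hcoef : ∀ k, coef k = c k 0 := fun k => rfl
  have hVs : ∀ s : ℝ, Continuous fun t : ℝ => v (s, t) :=
    fun s => hv.continuous.comp (by fun_prop)
  have hD1s : ∀ s : ℝ, Continuous fun t : ℝ => D1 (s, t) :=
    fun s => hcD1.comp (by fun_prop)
  have hD2s : ∀ s : ℝ, Continuous fun t : ℝ => D2 (s, t) :=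
    fun s => hcD2.comp (by fun_prop)
  have hccont : ∀ k, Continuous (c k) := by
    intro k
    exact continuous_parametric_intervalIntegral_of_continuous'
      (show Continuous (Function.uncurry fun s t => eC k t • v (s, t)) from
        ((eC_cont k).comp continuous_snd).smul hv.continuous) 0 1
  have hE1cont : ∀ k, Continuous (E1 k) := by
    intro k
    exact continuous_parametric_intervalIntegral_of_continuous'
      (show Continuous (Function.uncurry fun s t => eC k t • D1 (s, t)) from
        ((eC_cont k).comp continuous_snd).smul hcD1) 0 1
  have hE2cont : ∀ k, Continuous (E2 k) := by
    intro k
    exact continuous_parametric_intervalIntegral_of_continuous'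
      (show Continuous (Function.uncurry fun s t => eC k t • D2 (s, t)) from
        ((eC_cont k).comp continuous_snd).smul hcD2) 0 1
  have hcz : ∀ k s, S ≤ s → c k s = 0 := by
    intro k s hs
    show Fcv (fun t => v (s, t)) k = 0
    unfold Fcv
    have : ∀ t : ℝ, eC k t • v (s, t) = 0 := fun t => by rw [hvS s t hs, smul_zero]
    simp [this]
  have hE1z : ∀ k s, S < s → E1 k s = 0 := by
    intro k s hs
    show Fcv (fun t => D1 (s, t)) k = 0
    unfold Fcv
    have : ∀ t : ℝ, eC k t • D1 (s, t) = 0 := fun t => by rw [hD1z s t hs, smul_zero]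
    simp [this]
  have hE2z : ∀ k s, S < s → E2 k s = 0 := by
    intro k s hs
    show Fcv (fun t => D2 (s, t)) k = 0
    unfold Fcv
    have : ∀ t : ℝ, eC k t • D2 (s, t) = 0 := fun t => by rw [hD2z s t hs, smul_zero]
    simp [this]
  -- integration by parts in t
  have hE2c : ∀ k s, E2 k s = (2 * (π : ℂ) * Complex.I * k) • c k s := by
    intro k s
    have hder : ∀ t : ℝ, HasDerivAt (fun t => eC k t • v (s, t))
        (eC k t • D2 (s, t) + ((-2 * (π : ℂ) * Complex.I * (k : ℂ)) * eC k t) • v (s, t)) t :=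
      fun t => (eC_deriv k t).smul (hD2t s t)
    have hcont : Continuous fun t =>
        eC k t • D2 (s, t) + ((-2 * (π : ℂ) * Complex.I * (k : ℂ)) * eC k t) • v (s, t) :=
      ((eC_cont k).smul (hD2s s)).add ((continuous_const.mul (eC_cont k)).smul (hVs s))
    have hibp := intervalIntegral.integral_eq_sub_of_hasDerivAt (fun t _ => hder t)
      (hcont.intervalIntegrable 0 1)
    have hzero : eC k 1 • v (s, 1) - eC k 0 • v (s, 0) = 0 := by
      rw [eC_one, eC_zero, one_smul, one_smul, show (1:ℝ) = 0 + 1 from (zero_add 1).symm,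
        hper s 0, sub_self]
    rw [hzero] at hibp
    have hsplit2 : (∫ t in (0:ℝ)..1,
        (eC k t • D2 (s, t) + ((-2 * (π : ℂ) * Complex.I * (k : ℂ)) * eC k t) • v (s, t)))
        = E2 k s + (-2 * (π : ℂ) * Complex.I * (k : ℂ)) • c k s := by
      rw [intervalIntegral.integral_add (f := fun t => eC k t • D2 (s, t))
        (g := fun t => ((-2 * (π : ℂ) * Complex.I * (k : ℂ)) * eC k t) • v (s, t))
        (((eC_cont k).smul (hD2s s)).intervalIntegrable 0 1)
        (((continuous_const.mul (eC_cont k)).smul (hVs s)).intervalIntegrable 0 1)]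
      congr 1
      show (∫ t in (0:ℝ)..1, ((-2 * (π : ℂ) * Complex.I * (k : ℂ)) * eC k t) • v (s, t))
          = (-2 * (π : ℂ) * Complex.I * (k : ℂ)) • Fcv (fun t => v (s, t)) k
      unfold Fcv
      rw [← intervalIntegral.integral_smul]
      congr 1
      funext t
      rw [mul_smul]
    rw [hsplit2] at hibp
    have h9 := eq_neg_of_add_eq_zero_left hibp
    rw [h9, ← neg_smul]
    congr 1
    ring
  -- differentiation under the integral
  have hcd : ∀ k s, HasDerivAt (c k) (E1 k s) s := by
    intro k s₀
    obtain ⟨M, hM⟩ := (((isCompact_Icc (a := s₀ - 1) (b := s₀ + 1)).prod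
      (isCompact_Icc (a := (0:ℝ)) (b := 1)))).exists_bound_of_continuousOn hcD1.continuousOn
    have key := intervalIntegral.hasDerivAt_integral_of_dominated_loc_of_deriv_le
      (F := fun x t => eC k t • v (x, t)) (F' := fun x t => eC k t • D1 (x, t)) (x₀ := s₀)
      (a := 0) (b := 1) (bound := fun _ => M) (μ := volume) (s := Metric.ball s₀ 1) (Metric.ball_mem_nhds s₀ one_pos)
      (Filter.Eventually.of_forall fun x =>
        (((eC_cont k).smul (hVs x)).aestronglyMeasurable).restrict)
      ((((eC_cont k).smul (hVs s₀))).intervalIntegrable 0 1)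
      ((((eC_cont k).smul (hD1s s₀))).aestronglyMeasurable).restrict
      (ae_of_all _ fun t ht x hx => ?_) intervalIntegrable_const
      (ae_of_all _ fun t _ x _ => (hD1t x t).const_smul (eC k t))
    · exact key.2
    · rw [norm_smul, eC_norm, one_mul]
      have hx' : x ∈ Icc (s₀ - 1) (s₀ + 1) := by
        rw [Metric.mem_ball, Real.dist_eq, abs_sub_lt_iff] at hx
        constructor <;> linarith [hx.1, hx.2]
      have ht' : t ∈ Icc (0:ℝ) 1 := by
        rw [Set.uIoc_of_le (by norm_num : (0:ℝ) ≤ 1)] at ht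
        exact Ioc_subset_Icc_self ht
      exact hM (x, t) (mk_mem_prod hx' ht')
  -- Parseval identities
  have hFcvI : ∀ (s : ℝ) (k : ℤ),
      Fcv (fun t => Complex.I • D2 (s, t)) k = Complex.I • E2 k s := by
    intro s k
    show (∫ t in (0:ℝ)..1, eC k t • Complex.I • D2 (s, t))
        = Complex.I • Fcv (fun t => D2 (s, t)) k
    unfold Fcv
    rw [← intervalIntegral.integral_smul]
    congr 1
    funext t
    rw [smul_comm]
  have hPar : ∀ s : ℝ, HasSum (fun k : ℤ => ((inner ℂ (E1 k s) (Complex.I • E2 k s) : ℂ)).re)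
      (∫ t in (0:ℝ)..1, ((inner ℂ (D1 (s, t)) (Complex.I • D2 (s, t)) : ℂ)).re) := by
    intro s
    have h0 := vec_parseval (fun t => D1 (s, t)) (fun t => Complex.I • D2 (s, t))
      (hD1s s) ((hD2s s).const_smul Complex.I)
    have he : (fun k : ℤ => (inner ℂ (Fcv (fun t => D1 (s, t)) k)
          (Fcv (fun t => Complex.I • D2 (s, t)) k) : ℂ))
        = fun k : ℤ => (inner ℂ (E1 k s) (Complex.I • E2 k s) : ℂ) := by
      funext k
      rw [hFcvI s k]
    rw [he] at h0
    have h1 := h0.mapL Complex.reCLM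
    have h2 : Complex.reCLM (∫ t in (0:ℝ)..1, (inner ℂ (D1 (s, t)) (Complex.I • D2 (s, t)) : ℂ))
        = ∫ t in (0:ℝ)..1, ((inner ℂ (D1 (s, t)) (Complex.I • D2 (s, t)) : ℂ)).re := by
      rw [← Complex.reCLM.intervalIntegral_comp_comm
        (f := fun t => (inner ℂ (D1 (s, t)) (Complex.I • D2 (s, t)) : ℂ))
        (((hD1s s).inner ((hD2s s).const_smul Complex.I)).intervalIntegrable 0 1)]
      rfl
    rw [h2] at h1
    exact h1
  have hBes : ∀ (f : ℝ × ℝ → EuclideanSpace ℂ (Fin n)), Continuous f → ∀ s : ℝ,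
      HasSum (fun k : ℤ => ‖Fcv (fun t => f (s, t)) k‖ ^ 2)
        (∫ t in (0:ℝ)..1, ‖f (s, t)‖ ^ 2) := by
    intro f hf s
    have hfs : Continuous fun t : ℝ => f (s, t) := hf.comp (by fun_prop)
    have h0 := vec_parseval (fun t => f (s, t)) (fun t => f (s, t)) hfs hfs
    have h1 := h0.mapL Complex.reCLM
    have he : (fun k : ℤ => Complex.reCLM ((inner ℂ (Fcv (fun t => f (s, t)) k)
          (Fcv (fun t => f (s, t)) k) : ℂ)))
        = fun k : ℤ => ‖Fcv (fun t => f (s, t)) k‖ ^ 2 := by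
      funext k
      exact inner_self_eq_norm_sq (𝕜 := ℂ) _
    rw [he] at h1
    have h2 : Complex.reCLM (∫ t in (0:ℝ)..1, (inner ℂ (f (s, t)) (f (s, t)) : ℂ))
        = ∫ t in (0:ℝ)..1, ‖f (s, t)‖ ^ 2 := by
      rw [← Complex.reCLM.intervalIntegral_comp_comm
        ((hfs.inner hfs).intervalIntegrable 0 1)]
      refine intervalIntegral.integral_congr fun t _ => ?_
      exact inner_self_eq_norm_sq (𝕜 := ℂ) _
    rw [h2] at h1
    exact h1
  have hBes1 : ∀ s : ℝ, HasSum (fun k : ℤ => ‖E1 k s‖ ^ 2)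
      (∫ t in (0:ℝ)..1, ‖D1 (s, t)‖ ^ 2) := hBes D1 hcD1
  have hBes2 : ∀ s : ℝ, HasSum (fun k : ℤ => ‖E2 k s‖ ^ 2)
      (∫ t in (0:ℝ)..1, ‖D2 (s, t)‖ ^ 2) := hBes D2 hcD2
  -- definition of the correction term
  set F : ℤ → ℝ → ℝ :=
    fun k s => (-2) * ((inner ℂ (E1 k s) (Complex.I • E2 k s) : ℂ)).re with hFdef
  set N : ℝ → ℝ :=
    fun s => ∫ t in (0:ℝ)..1, (-2) * ((inner ℂ (D1 (s, t)) (Complex.I • D2 (s, t)) : ℂ)).re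
    with hNdef
  have hNsum : ∀ s, HasSum (fun k => F k s) (N s) := by
    intro s
    have h := (hPar s).mul_left (-2)
    have hNs : N s = -2 * ∫ t in (0:ℝ)..1, ((inner ℂ (D1 (s, t)) (Complex.I • D2 (s, t)) : ℂ)).re :=
      intervalIntegral.integral_const_mul _ _
    rw [hNs]
    exact h
  have hFcont : ∀ k, Continuous (F k) := by
    intro k
    exact continuous_const.mul
      (Complex.continuous_re.comp ((hE1cont k).inner ((hE2cont k).const_smul Complex.I)))
  have hFz : ∀ k s, S < s → F k s = 0 := by
    intro k s hs
    simp [hFdef, hE1z k s hs]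
  have hNcont : Continuous N := by
    refine continuous_parametric_intervalIntegral_of_continuous' ?_ 0 1
    show Continuous fun q : ℝ × ℝ => (-2) * ((inner ℂ (D1 q) (Complex.I • D2 q) : ℂ)).re
    exact continuous_const.mul
      (Complex.continuous_re.comp (hcD1.inner (hcD2.const_smul Complex.I)))
  have hNz : ∀ s, S < s → N s = 0 := by
    intro s hs
    have : ∀ t : ℝ, (-2) * ((inner ℂ (D1 (s, t)) (Complex.I • D2 (s, t)) : ℂ)).re = 0 := by
      intro t
      rw [hD1z s t hs]
      simp
    simp only [hNdef]
    rw [intervalIntegral.integral_congr (fun t _ => this t)]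
    simp
  -- summability of the norms of integrals
  have hFint : ∀ k : ℤ, Integrable (F k) (volume.restrict (Ioi 0)) := fun k =>
    (integrableOn_and_integral hS0 (hFcont k) (hFz k)).1
  have hFnorm_sum : Summable fun k : ℤ => ∫ s in Ioi 0, ‖F k s‖ := by
    set h : ℤ → ℝ → ℝ := fun k s => ‖E1 k s‖ ^ 2 + ‖E2 k s‖ ^ 2 with hhdef
    have hle : ∀ k s, ‖F k s‖ ≤ h k s := by
      intro k s
      have step1 : ‖F k s‖ = 2 * |((inner ℂ (E1 k s) (Complex.I • E2 k s) : ℂ)).re| := by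
        rw [hFdef, Real.norm_eq_abs, abs_mul]
        norm_num
      rw [step1, hhdef]
      calc 2 * |((inner ℂ (E1 k s) (Complex.I • E2 k s) : ℂ)).re|
          ≤ 2 * ‖(inner ℂ (E1 k s) (Complex.I • E2 k s) : ℂ)‖ := by
            gcongr
            exact Complex.abs_re_le_norm _
        _ ≤ 2 * (‖E1 k s‖ * ‖Complex.I • E2 k s‖) := by
            gcongr
            exact norm_inner_le_norm _ _
        _ = 2 * ‖E1 k s‖ * ‖E2 k s‖ := by
            rw [norm_smul, Complex.norm_I, one_mul, mul_assoc]
        _ ≤ ‖E1 k s‖ ^ 2 + ‖E2 k s‖ ^ 2 := two_mul_le_add_sq _ _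
    have hhcont : ∀ k, Continuous (h k) :=
      fun k => (((hE1cont k).norm).pow 2).add (((hE2cont k).norm).pow 2)
    have hhz : ∀ k s, S < s → h k s = 0 := by
      intro k s hs
      rw [hhdef]
      simp [hE1z k s hs, hE2z k s hs]
    have hIH := fun k : ℤ => integrableOn_and_integral hS0 (hhcont k) (hhz k)
    -- dominating function
    set A1 : ℝ → ℝ := fun s => ∫ t in (0:ℝ)..1, ‖D1 (s, t)‖ ^ 2 with hA1def
    set A2 : ℝ → ℝ := fun s => ∫ t in (0:ℝ)..1, ‖D2 (s, t)‖ ^ 2 with hA2def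
    have hA1cont : Continuous A1 := by
      refine continuous_parametric_intervalIntegral_of_continuous' ?_ 0 1
      show Continuous fun q : ℝ × ℝ => ‖D1 q‖ ^ 2
      exact (hcD1.norm).pow 2
    have hA2cont : Continuous A2 := by
      refine continuous_parametric_intervalIntegral_of_continuous' ?_ 0 1
      show Continuous fun q : ℝ × ℝ => ‖D2 q‖ ^ 2
      exact (hcD2.norm).pow 2
    have hA1z : ∀ s, S < s → A1 s = 0 := by
      intro s hs
      show (∫ t in (0:ℝ)..1, ‖D1 (s, t)‖ ^ 2) = 0
      have : ∀ t : ℝ, ‖D1 (s, t)‖ ^ 2 = (0:ℝ) := fun t => by rw [hD1z s t hs]; simp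
      rw [intervalIntegral.integral_congr (fun t _ => this t)]
      simp
    have hA2z : ∀ s, S < s → A2 s = 0 := by
      intro s hs
      show (∫ t in (0:ℝ)..1, ‖D2 (s, t)‖ ^ 2) = 0
      have : ∀ t : ℝ, ‖D2 (s, t)‖ ^ 2 = (0:ℝ) := fun t => by rw [hD2z s t hs]; simp
      rw [intervalIntegral.integral_congr (fun t _ => this t)]
      simp
    have hψint : IntegrableOn (fun s => A1 s + A2 s) (Ioi 0) volume :=
      (integrableOn_and_integral hS0 (hA1cont.add hA2cont)
        (fun s hs => by rw [Pi.add_apply, hA1z s hs, hA2z s hs, add_zero])).1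
    -- partial sums of ∫ h k are bounded
    have hsum_h : Summable fun k : ℤ => ∫ s in Ioi 0, h k s := by
      refine summable_of_sum_le (c := ∫ s in Ioi 0, (A1 s + A2 s))
        (fun k => setIntegral_nonneg measurableSet_Ioi fun s _ => by positivity) ?_
      intro u
      have e1 : (∑ k ∈ u, ∫ s in Ioi 0, h k s) = ∫ s in Ioi 0, ∑ k ∈ u, h k s :=
        (integral_finset_sum u fun k _ => (hIH k).1).symm
      rw [e1]
      refine integral_mono (integrable_finset_sum u fun k _ => (hIH k).1) hψint fun s => ?_
      have b1 : (∑ k ∈ u, ‖E1 k s‖ ^ 2) ≤ A1 s :=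
        sum_le_hasSum u (fun k _ => by positivity) (hBes1 s)
      have b2 : (∑ k ∈ u, ‖E2 k s‖ ^ 2) ≤ A2 s :=
        sum_le_hasSum u (fun k _ => by positivity) (hBes2 s)
      calc (∑ k ∈ u, h k s) = (∑ k ∈ u, ‖E1 k s‖ ^ 2) + ∑ k ∈ u, ‖E2 k s‖ ^ 2 :=
            Finset.sum_add_distrib
        _ ≤ A1 s + A2 s := add_le_add b1 b2
    refine Summable.of_nonneg_of_le
      (fun k => setIntegral_nonneg measurableSet_Ioi fun s _ => norm_nonneg _)
      (fun k => ?_) hsum_h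
    refine integral_mono ((hFint k).norm) (hIH k).1 fun s => hle k s
  -- interchange of sum and integral
  have Hmain : HasSum (fun k : ℤ => ∫ s in Ioi 0, F k s) (∫ s in Ioi 0, N s) := by
    have h := MeasureTheory.hasSum_integral_of_summable_integral_norm
      (F := F) (μ := volume.restrict (Ioi 0)) hFint hFnorm_sum
    have he : (∫ s in Ioi 0, ∑' k : ℤ, F k s) = ∫ s in Ioi 0, N s :=
      integral_congr_ae (ae_of_all _ fun s => (hNsum s).tsum_eq)
    rwa [he] at h
  -- evaluation of each integral
  have hIk : ∀ k : ℤ, (∫ s in Ioi 0, F k s) = -(2 * π * (k:ℝ)) * ‖c k 0‖ ^ 2 := by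
    intro k
    have hreeq : ∀ s : ℝ, F k s
        = 2 * π * (k:ℝ) * (2 * ((inner ℂ (E1 k s) (c k s) : ℂ)).re) := by
      intro s
      have e0 : F k s = -2 * ((inner ℂ (E1 k s) (Complex.I • E2 k s) : ℂ)).re := rfl
      rw [e0, hE2c k s]
      rw [inner_smul_right, inner_smul_right]
      have e1 : Complex.I * (2 * (π : ℂ) * Complex.I * (k : ℂ)
            * (inner ℂ (E1 k s) (c k s) : ℂ))
          = ((-(2 * π * (k:ℝ)) : ℝ) : ℂ) * (inner ℂ (E1 k s) (c k s) : ℂ) := by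
        push_cast
        linear_combination (2 * (π:ℂ) * (k:ℂ) * (inner ℂ (E1 k s) (c k s) : ℂ)) * Complex.I_sq
      rw [e1, Complex.re_ofReal_mul]
      ring
    have hφ : ∀ s : ℝ, HasDerivAt (fun s => ‖c k s‖ ^ 2)
        (2 * ((inner ℂ (E1 k s) (c k s) : ℂ)).re) s := by
      intro s
      have h1 := HasDerivAt.inner ℝ (hcd k s) (hcd k s)
      have e2 : (fun s => (inner ℝ (c k s) (c k s) : ℝ)) = fun s => ‖c k s‖ ^ 2 :=
        funext fun s => real_inner_self_eq_norm_sq _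
      rw [e2] at h1
      have e3 : (inner ℝ (c k s) (E1 k s) : ℝ) + (inner ℝ (E1 k s) (c k s) : ℝ)
          = 2 * ((inner ℂ (E1 k s) (c k s) : ℂ)).re := by
        rw [real_inner_comm, re_inner_eq]
        ring
      rw [e3] at h1
      exact h1
    have hcsc : Continuous fun s => 2 * ((inner ℂ (E1 k s) (c k s) : ℂ)).re :=
      continuous_const.mul (Complex.continuous_re.comp ((hE1cont k).inner (hccont k)))
    rw [(integrableOn_and_integral hS0 (hFcont k) (hFz k)).2]
    calc (∫ s in (0:ℝ)..S, F k s)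
        = ∫ s in (0:ℝ)..S, 2 * π * (k:ℝ) * (2 * ((inner ℂ (E1 k s) (c k s) : ℂ)).re) :=
          intervalIntegral.integral_congr fun s _ => hreeq s
      _ = 2 * π * (k:ℝ) * ∫ s in (0:ℝ)..S, (2 * ((inner ℂ (E1 k s) (c k s) : ℂ)).re) :=
          intervalIntegral.integral_const_mul _ _
      _ = 2 * π * (k:ℝ) * (‖c k S‖ ^ 2 - ‖c k 0‖ ^ 2) := by
          rw [intervalIntegral.integral_eq_sub_of_hasDerivAt (fun s _ => hφ s)
            (hcsc.intervalIntegrable 0 S)]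
      _ = -(2 * π * (k:ℝ)) * ‖c k 0‖ ^ 2 := by
          rw [hcz k S le_rfl]
          simp
  -- reindexing
  have HmainN : HasSum (fun k : ℤ => -(2 * π * (k:ℝ)) * ‖c k 0‖ ^ 2) (∫ s in Ioi 0, N s) := by
    have he : (fun k : ℤ => ∫ s in Ioi 0, F k s)
        = fun k : ℤ => -(2 * π * (k:ℝ)) * ‖c k 0‖ ^ 2 := funext hIk
    exact he ▸ Hmain
  have hNval : (∫ s in Ioi 0, N s) =
      2 * π * (∑' k : ℕ, ((k : ℝ) + 1) * ‖coef (-(k : ℤ) - 1)‖ ^ 2) -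
      2 * π * (∑' k : ℕ, ((k : ℝ) + 1) * ‖coef ((k : ℤ) + 1)‖ ^ 2) := by
    have hπ : (2 * π) ≠ 0 := by positivity
    set w : ℤ → ℝ := fun k => -(2 * π * (k:ℝ)) * ‖c k 0‖ ^ 2 with hwdef
    have hsw : Summable w := HmainN.summable
    have hinj1 : Function.Injective (fun m : ℕ => (m:ℤ) + 1) := by
      intro a b hab
      have := add_right_cancel (show (a:ℤ) + 1 = (b:ℤ) + 1 from hab)
      exact_mod_cast this
    have hinj2 : Function.Injective (fun m : ℕ => -((m:ℤ) + 1)) := by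
      intro a b hab
      have := neg_injective (show -((a:ℤ) + 1) = -((b:ℤ) + 1) from hab)
      have := add_right_cancel this
      exact_mod_cast this
    have hs1 : Summable fun m : ℕ => w ((m:ℤ) + 1) := hsw.comp_injective hinj1
    have hs2 : Summable fun m : ℕ => w (-((m:ℤ) + 1)) := hsw.comp_injective hinj2
    have hs1' : Summable fun m : ℕ => ((m:ℝ) + 1) * ‖coef ((m:ℤ) + 1)‖ ^ 2 := by
      have h := hs1.mul_left (-(1 / (2 * π)))
      refine h.congr fun m => ?_
      rw [hcoef]
      show -(1 / (2 * π)) * (-(2 * π * ((((m:ℤ) + 1) : ℤ):ℝ)) * ‖c ((m:ℤ) + 1) 0‖ ^ 2) = _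
      push_cast
      field_simp
    have hs2' : Summable fun m : ℕ => ((m:ℝ) + 1) * ‖coef (-(m:ℤ) - 1)‖ ^ 2 := by
      have h := hs2.mul_left (1 / (2 * π))
      refine h.congr fun m => ?_
      rw [hcoef]
      show (1 / (2 * π)) * (-(2 * π * (((-((m:ℤ) + 1)) : ℤ):ℝ)) * ‖c (-((m:ℤ) + 1)) 0‖ ^ 2) = _
      rw [show -((m:ℤ) + 1) = -(m:ℤ) - 1 by ring]
      push_cast
      field_simp
      ring
    have hA2 : HasSum (fun m : ℕ => w ((m:ℤ) + 1))
        (-(2 * π) * ∑' m : ℕ, ((m:ℝ) + 1) * ‖coef ((m:ℤ) + 1)‖ ^ 2) := by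
      have h := hs1'.hasSum.mul_left (-(2 * π))
      have he : (fun m : ℕ => -(2 * π) * (((m:ℝ) + 1) * ‖coef ((m:ℤ) + 1)‖ ^ 2))
          = fun m : ℕ => w ((m:ℤ) + 1) := by
        funext m
        rw [hcoef]
        show _ = -(2 * π * ((((m:ℤ) + 1) : ℤ):ℝ)) * ‖c ((m:ℤ) + 1) 0‖ ^ 2
        push_cast
        ring
      exact he ▸ h
    have hB2 : HasSum (fun m : ℕ => w (-((m:ℤ) + 1)))
        ((2 * π) * ∑' m : ℕ, ((m:ℝ) + 1) * ‖coef (-(m:ℤ) - 1)‖ ^ 2) := by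
      have h := hs2'.hasSum.mul_left (2 * π)
      have he : (fun m : ℕ => (2 * π) * (((m:ℝ) + 1) * ‖coef (-(m:ℤ) - 1)‖ ^ 2))
          = fun m : ℕ => w (-((m:ℤ) + 1)) := by
        funext m
        rw [hcoef]
        show _ = -(2 * π * (((-((m:ℤ) + 1)) : ℤ):ℝ)) * ‖c (-((m:ℤ) + 1)) 0‖ ^ 2
        rw [show -((m:ℤ) + 1) = -(m:ℤ) - 1 by ring]
        push_cast
        ring
      exact he ▸ h
    have htotal := HasSum.of_add_one_of_neg_add_one hA2 hB2
    have hw0 : w 0 = 0 := by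
      show -(2 * π * ((0:ℤ):ℝ)) * ‖c 0 0‖ ^ 2 = 0
      simp
    rw [HmainN.unique htotal, hw0]
    ring
  -- pointwise splitting of the energy
  have hsplit : ∀ s : ℝ, (∫ t in (0:ℝ)..1, (‖D1 (s, t)‖ ^ 2 + ‖D2 (s, t)‖ ^ 2)) =
      (∫ t in (0:ℝ)..1, ‖D1 (s, t) + Complex.I • D2 (s, t)‖ ^ 2) + N s := by
    intro s
    have h1 : IntervalIntegrable (fun t => ‖D1 (s, t) + Complex.I • D2 (s, t)‖ ^ 2)
        volume 0 1 :=
      ((((hD1s s).add ((hD2s s).const_smul Complex.I)).norm).pow 2).intervalIntegrable 0 1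
    have h2 : IntervalIntegrable
        (fun t => (-2) * ((inner ℂ (D1 (s, t)) (Complex.I • D2 (s, t)) : ℂ)).re) volume 0 1 :=
      (continuous_const.mul (Complex.continuous_re.comp
        ((hD1s s).inner ((hD2s s).const_smul Complex.I)))).intervalIntegrable 0 1
    have e0 : (∫ t in (0:ℝ)..1, ‖D1 (s, t) + Complex.I • D2 (s, t)‖ ^ 2) + N s
        = ∫ t in (0:ℝ)..1, (‖D1 (s, t) + Complex.I • D2 (s, t)‖ ^ 2
            + (-2) * ((inner ℂ (D1 (s, t)) (Complex.I • D2 (s, t)) : ℂ)).re) :=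
      (intervalIntegral.integral_add h1 h2).symm
    rw [e0]
    refine intervalIntegral.integral_congr fun t _ => ?_
    have e1 : ((inner ℂ (D1 (s, t)) (Complex.I • D2 (s, t)) : ℂ)).re
        = (inner ℝ (D1 (s, t)) (Complex.I • D2 (s, t)) : ℝ) := re_inner_eq _ _
    rw [e1, norm_add_sq_real, norm_smul, Complex.norm_I, one_mul]
    ring
  -- integrability of both pieces
  have hBcont : Continuous fun s => ∫ t in (0:ℝ)..1, ‖D1 (s, t) + Complex.I • D2 (s, t)‖ ^ 2 := by
    refine continuous_parametric_intervalIntegral_of_continuous' ?_ 0 1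
    show Continuous fun q : ℝ × ℝ => ‖D1 q + Complex.I • D2 q‖ ^ 2
    exact ((hcD1.add (hcD2.const_smul Complex.I)).norm).pow 2
  have hBz : ∀ s, S < s → (∫ t in (0:ℝ)..1, ‖D1 (s, t) + Complex.I • D2 (s, t)‖ ^ 2) = 0 := by
    intro s hs
    have : ∀ t : ℝ, ‖D1 (s, t) + Complex.I • D2 (s, t)‖ ^ 2 = 0 := by
      intro t; rw [hD1z s t hs, hD2z s t hs]; simp
    rw [intervalIntegral.integral_congr (fun t _ => this t)]
    simp
  have hBint := (integrableOn_and_integral hS0 hBcont hBz).1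
  have hNint := (integrableOn_and_integral hS0 hNcont hNz).1
  -- final assembly
  calc (∫ s in Set.Ioi (0:ℝ), ∫ t in (0:ℝ)..1, (‖D1 (s, t)‖ ^ 2 + ‖D2 (s, t)‖ ^ 2))
      = ∫ s in Set.Ioi (0:ℝ),
        ((∫ t in (0:ℝ)..1, ‖D1 (s, t) + Complex.I • D2 (s, t)‖ ^ 2) + N s) :=
        integral_congr_ae (ae_of_all _ fun s => hsplit s)
    _ = (∫ s in Set.Ioi (0:ℝ), ∫ t in (0:ℝ)..1, ‖D1 (s, t) + Complex.I • D2 (s, t)‖ ^ 2)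
        + ∫ s in Set.Ioi (0:ℝ), N s := integral_add hBint hNint
    _ = _ := by rw [hNval]; ring
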